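/- For any graph G and any vertex v of G, st_id(G) ≤ st_id(G − v) + 1. -/

import Mathlib

open SimpleGraph

/-- `S` is an independent dominating set of `G`. -/
def SimpleGraph.IsIndepDomSet {V : Type*} (G : SimpleGraph V) (S : Set V) : Prop :=
  (S.Pairwise fun u v => ¬ G.Adj u v) ∧ ∀ v ∉ S, ∃ u ∈ S, G.Adj v u

/-- The independent domination number `γᵢ(G)`. -/
noncomputable def indepDomNum (V : Type*) [Fintype V] (G : SimpleGraph V) : ℕ :=
  sInf {n | ∃ S : Finset V, G.IsIndepDomSet ↑S ∧ S.card = n}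

/-- The independent domination stability `st_id(G)`: the minimum number of
vertices whose removal changes the independent domination number. -/
noncomputable def idStability (V : Type*) [Fintype V] [DecidableEq V]
    (G : SimpleGraph V) : ℕ :=
  sInf {k | ∃ A : Finset V, A.card = k ∧ A.Nonempty ∧
    indepDomNum _ (G.induce (↑(Aᶜ) : Set V)) ≠ indepDomNum V G}

lemma exists_indepDomSet {V : Type*} [Fintype V] (G : SimpleGraph V) :
    ∃ S : Finset V, G.IsIndepDomSet ↑S := by
  classical
  obtain ⟨S, -, hS, hmax⟩ := Finite.exists_le_maximal
    (p := fun S : Finset V => (↑S : Set V).Pairwise fun u w => ¬ G.Adj u w)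
    (a := ∅) (by simp)
  refine ⟨S, hS, ?_⟩
  intro w hw
  by_contra hno
  push_neg at hno
  have hsymm : Symmetric (fun u w : V => ¬ G.Adj u w) := fun a b h hab => h hab.symm
  have hins : ((insert w ↑S : Set V)).Pairwise fun u w => ¬ G.Adj u w := by
    haveI : Std.Symm (fun u w : V => ¬ G.Adj u w) := ⟨fun a b h => hsymm h⟩
    rw [Set.pairwise_insert_of_symm]
    exact ⟨hS, fun b hb _ => hno b hb⟩
  have hle : S ≤ insert w S := Finset.subset_insert w S
  have := hmax (y := insert w S) (by simpa using hins) hle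
  exact hw (by simpa using this (Finset.mem_insert_self w S))

lemma indepDomNum_eq_zero {V : Type*} [Fintype V] [IsEmpty V] (G : SimpleGraph V) :
    indepDomNum V G = 0 := by
  have : (0 : ℕ) ∈ {n | ∃ S : Finset V, G.IsIndepDomSet ↑S ∧ S.card = n} :=
    ⟨∅, ⟨by simp [Set.Pairwise], fun v _ => isEmptyElim v⟩, rfl⟩
  exact Nat.le_zero.mp (Nat.sInf_le this)

lemma indepDomNum_pos {V : Type*} [Fintype V] [Nonempty V] (G : SimpleGraph V) :
    0 < indepDomNum V G := by
  rcases Nat.eq_zero_or_pos (indepDomNum V G) with h | h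
  · exfalso
    obtain ⟨S, hS⟩ := exists_indepDomSet G
    have hne : {n | ∃ S : Finset V, G.IsIndepDomSet ↑S ∧ S.card = n}.Nonempty :=
      ⟨S.card, S, hS, rfl⟩
    have hmem := Nat.sInf_mem hne
    rw [indepDomNum] at h
    rw [h] at hmem
    obtain ⟨T, hT, hTcard⟩ := hmem
    rw [Finset.card_eq_zero] at hTcard
    subst hTcard
    obtain ⟨w⟩ := ‹Nonempty V›
    obtain ⟨u, hu, -⟩ := hT.2 w (by simp)
    simp at hu
  · exact h

lemma isIndepDomSet_map {V W : Type*} {G : SimpleGraph V} {H : SimpleGraph W}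
    (e : G ≃g H) {S : Finset V} [DecidableEq W] (h : G.IsIndepDomSet ↑S) :
    H.IsIndepDomSet ↑(S.image e) := by
  constructor
  · rintro x hx y hy hxy hadj
    simp only [Finset.coe_image, Set.mem_image, Finset.mem_coe] at hx hy
    obtain ⟨a, ha, rfl⟩ := hx
    obtain ⟨b, hb, rfl⟩ := hy
    exact h.1 ha hb (fun hab => hxy (by rw [hab])) (e.map_adj_iff.mp hadj)
  · intro w hw
    have hw' : e.symm w ∉ S := by
      intro hmem
      apply hw
      simp only [Finset.coe_image, Set.mem_image, Finset.mem_coe]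
      exact ⟨e.symm w, hmem, by simp⟩
    obtain ⟨u, hu, hadj⟩ := h.2 _ hw'
    refine ⟨e u, ?_, ?_⟩
    · simp only [Finset.coe_image, Set.mem_image, Finset.mem_coe]
      exact ⟨u, hu, rfl⟩
    · have := e.map_adj_iff.mpr hadj
      simpa using this

lemma indepDomNum_eq_of_iso {V W : Type*} [Fintype V] [Fintype W]
    {G : SimpleGraph V} {H : SimpleGraph W} (e : G ≃g H) :
    indepDomNum V G = indepDomNum W H := by
  classical
  unfold indepDomNum
  congr 1
  ext n
  constructor
  · rintro ⟨S, hS, rfl⟩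
    exact ⟨S.image e, isIndepDomSet_map e hS,
      Finset.card_image_of_injective _ e.toEquiv.injective⟩
  · rintro ⟨S, hS, rfl⟩
    exact ⟨S.image e.symm, isIndepDomSet_map e.symm hS,
      Finset.card_image_of_injective _ e.symm.toEquiv.injective⟩

/-- For any graph `G` and vertex `v`, `st_id(G) ≤ st_id(G - v) + 1`. -/
theorem stmt13 {V : Type*} [Fintype V] [DecidableEq V] (G : SimpleGraph V)
    (v : V) :
    idStability V G ≤
      idStability _ (G.induce (↑(({v} : Finset V)ᶜ) : Set V)) + 1 := by
  classical
  set s₁ : Set V := (↑(({v} : Finset V)ᶜ) : Set V) with hs₁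
  set H := G.induce s₁ with hH
  have hco : idStability ↥(↑(({v} : Finset V)ᶜ) : Set V) H = idStability ↥s₁ H := rfl
  by_cases hEq : indepDomNum _ H = indepDomNum V G
  · -- equal case
    have hneV : Nonempty V := ⟨v⟩
    have hGpos : 0 < indepDomNum V G := indepDomNum_pos G
    have hHpos : 0 < indepDomNum _ H := hEq ▸ hGpos
    have hne : Nonempty ↥s₁ := by
      by_contra hempty
      rw [not_nonempty_iff] at hempty
      exact absurd (indepDomNum_eq_zero H) (by omega)
    -- the stability set for H is nonempty
    have hsetne : {k | ∃ A : Finset ↥s₁, A.card = k ∧ A.Nonempty ∧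
        indepDomNum _ (H.induce (↑(Aᶜ) : Set ↥s₁)) ≠ indepDomNum _ H}.Nonempty := by
      refine ⟨(Finset.univ : Finset ↥s₁).card, Finset.univ, rfl,
        Finset.univ_nonempty, ?_⟩
      have hempty : IsEmpty ↥(↑((Finset.univ : Finset ↥s₁)ᶜ) : Set ↥s₁) := by
        constructor
        rintro ⟨x, hx⟩
        simp at hx
      have := indepDomNum_eq_zero (H.induce (↑((Finset.univ : Finset ↥s₁)ᶜ) : Set ↥s₁))
      omega
    obtain ⟨A', hA'card, hA'ne, hA'⟩ := Nat.sInf_mem hsetne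
    set A : Finset V := insert v (A'.image Subtype.val) with hA
    have hvnot : v ∉ A'.image Subtype.val := by
      simp only [Finset.mem_image, not_exists, not_and]
      rintro ⟨x, hx⟩ -
      intro hxv
      simp only [hs₁, Finset.coe_compl, Finset.coe_singleton, Set.mem_compl_iff,
        Set.mem_singleton_iff] at hx
      exact hx hxv
    have hAcard : A.card = A'.card + 1 := by
      rw [hA, Finset.card_insert_of_notMem hvnot,
        Finset.card_image_of_injective _ Subtype.val_injective]
    -- isomorphism between (H.induce ↑(A'ᶜ)) and (G.induce ↑(Aᶜ))
    have hmemA : ∀ x : V, x ∈ (↑(Aᶜ) : Set V) ↔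
        (x ≠ v ∧ ∀ y : ↥s₁, y ∈ A' → (y : V) ≠ x) := by
      intro x
      simp only [hA, Finset.coe_compl, Set.mem_compl_iff, Finset.mem_coe,
        Finset.mem_insert, Finset.mem_image, not_or, not_exists, not_and]
    let eqv : ↥(↑(A'ᶜ) : Set ↥s₁) ≃ ↥(↑(Aᶜ) : Set V) :=
      { toFun := fun p => ⟨(p.1 : V), by
          rw [hmemA]
          have hp1 : (p.1 : V) ∈ s₁ := p.1.2
          have hp2 : p.1 ∉ A' := by
            have := p.2
            simpa using this
          constructor
          · simpa [hs₁] using hp1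
          · intro y hy hyx
            exact hp2 (by rwa [Subtype.ext hyx] at hy)⟩
        invFun := fun q => ⟨⟨q.1, by
            have := (hmemA q.1).mp q.2
            simp [hs₁, this.1]⟩, by
          have := (hmemA q.1).mp q.2
          simp only [Finset.coe_compl, Set.mem_compl_iff, Finset.mem_coe]
          intro hmem
          exact this.2 _ hmem rfl⟩
        left_inv := fun p => by ext; rfl
        right_inv := fun q => by ext; rfl }
    let iso : (H.induce (↑(A'ᶜ) : Set ↥s₁)) ≃g (G.induce (↑(Aᶜ) : Set V)) :=
      ⟨eqv, fun {a b} => Iff.rfl⟩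
    have hnum : indepDomNum _ (G.induce (↑(Aᶜ) : Set V)) =
        indepDomNum _ (H.induce (↑(A'ᶜ) : Set ↥s₁)) :=
      (indepDomNum_eq_of_iso iso).symm
    have hle : idStability V G ≤ A.card := by
      apply Nat.sInf_le
      refine ⟨A, rfl, ⟨v, by simp [hA]⟩, ?_⟩
      rw [hnum]
      exact fun h => hA' (h.trans hEq.symm)
    have hkey : idStability ↥s₁ H = A'.card := by
      rw [idStability]
      exact hA'card.symm
    omega
  · -- unequal case: {v} is a witness of size 1
    have h1 : idStability V G ≤ 1 := by
      apply Nat.sInf_le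
      exact ⟨{v}, Finset.card_singleton v, Finset.singleton_nonempty v, hEq⟩
    omega
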